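/- Let n, r, t be positive integers, and suppose that for each i ∈ [n] we are given t pairwise disjoint sets R_i^1, …, R_i^t ⊆ [n]\{i}, each of size exactly r. Then there exists a subset U ⊆ [n] with |U| ≥ n·(1 − 1/∏_{j=1}^{t}(1 + 1/(jr))) such that for every nonempty subset U' ⊆ U there is a vertex v ∈ U' and a color j ∈ [t] with R_v^j ∩ U' = ∅. -/

import Mathlib

open Finset

lemma count_all_before {n : ℕ} (v : Fin n) (W : Finset (Fin n)) (hv : v ∉ W) :
    (Finset.univ.filter
        (fun π : Equiv.Perm (Fin n) => ∀ w ∈ W, π w < π v)).card * (W.card + 1)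
      = Fintype.card (Equiv.Perm (Fin n)) := by
  classical
  set S : Finset (Fin n) := insert v W with hS
  set C : Fin n → Finset (Equiv.Perm (Fin n)) :=
    fun u => Finset.univ.filter (fun π => ∀ w ∈ S, w ≠ u → π w < π u) with hC
  have hdisj : ∀ u ∈ S, ∀ u' ∈ S, u ≠ u' → Disjoint (C u) (C u') := by
    intro u hu u' hu' huu'
    refine Finset.disjoint_left.2 ?_
    intro π hπ hπ'
    simp only [hC, Finset.mem_filter, Finset.mem_univ, true_and] at hπ hπ'
    exact absurd (hπ u' hu' (Ne.symm huu')) (not_lt.2 (le_of_lt (hπ' u hu huu')))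
  have hcover : S.biUnion C = Finset.univ := by
    ext π
    simp only [Finset.mem_biUnion, Finset.mem_univ, iff_true]
    obtain ⟨u, hu, hmax⟩ := S.exists_max_image (fun w => π w) ⟨v, Finset.mem_insert_self _ _⟩
    refine ⟨u, hu, ?_⟩
    simp only [hC, Finset.mem_filter, Finset.mem_univ, true_and]
    intro w hw hne
    exact lt_of_le_of_ne (hmax w hw) (fun h => hne (π.injective h))
  have hcard_eq : ∀ u ∈ W, (C u).card = (C v).card := by
    intro u hu
    have huv : u ≠ v := fun h => hv (h ▸ hu)
    apply Finset.card_bij (fun π _ => π * Equiv.swap u v)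
    · intro π hπ
      simp only [hC, Finset.mem_filter, Finset.mem_univ, true_and] at hπ ⊢
      intro w hw hwv
      have h1 : (π * Equiv.swap u v) v = π u := by
        simp [Equiv.Perm.mul_apply, Equiv.swap_apply_right]
      rw [h1]
      by_cases hwu : w = u
      · have : (π * Equiv.swap u v) w = π v := by
          rw [hwu]; simp [Equiv.Perm.mul_apply, Equiv.swap_apply_left]
        rw [this]
        exact hπ v (Finset.mem_insert_self _ _) (Ne.symm huv)
      · have : (π * Equiv.swap u v) w = π w := by
          simp [Equiv.Perm.mul_apply, Equiv.swap_apply_of_ne_of_ne hwu hwv]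
        rw [this]
        exact hπ w hw hwu
    · intro π₁ h₁ π₂ h₂ h
      exact mul_right_cancel h
    · intro σ hσ
      refine ⟨σ * Equiv.swap u v, ?_, ?_⟩
      · simp only [hC, Finset.mem_filter, Finset.mem_univ, true_and] at hσ ⊢
        intro w hw hwu
        have h1 : (σ * Equiv.swap u v) u = σ v := by
          simp [Equiv.Perm.mul_apply, Equiv.swap_apply_left]
        rw [h1]
        by_cases hwv : w = v
        · have : (σ * Equiv.swap u v) w = σ u := by
            rw [hwv]; simp [Equiv.Perm.mul_apply, Equiv.swap_apply_right]
          rw [this]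
          exact hσ u (Finset.mem_insert_of_mem hu) huv
        · have : (σ * Equiv.swap u v) w = σ w := by
            simp [Equiv.Perm.mul_apply, Equiv.swap_apply_of_ne_of_ne hwu hwv]
          rw [this]
          exact hσ w hw hwv
      · rw [mul_assoc, Equiv.swap_mul_self, mul_one]
  have hCv : C v = Finset.univ.filter (fun π : Equiv.Perm (Fin n) => ∀ w ∈ W, π w < π v) := by
    apply Finset.filter_congr
    intro π _
    simp only [hS]
    constructor
    · intro h w hw
      exact h w (Finset.mem_insert_of_mem hw) (fun he => hv (he ▸ hw))
    · intro h w hw hwv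
      rcases Finset.mem_insert.1 hw with h1 | h1
      · exact absurd h1 hwv
      · exact h w h1
  have htotal : Fintype.card (Equiv.Perm (Fin n)) = ∑ u ∈ S, (C u).card := by
    rw [← Finset.card_biUnion hdisj, hcover, Finset.card_univ]
  rw [htotal, hS, Finset.sum_insert hv, Finset.sum_congr rfl hcard_eq, Finset.sum_const,
    smul_eq_mul, hCv]
  ring

lemma alt_sum (t : ℕ) : ∀ x : ℝ, 0 < x →
    ∑ k ∈ Finset.range (t+1), (-1:ℝ)^k * (t.choose k) / (x + k)
      = (t.factorial : ℝ) / ∏ k ∈ Finset.range (t+1), (x + k) := by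
  induction t with
  | zero => intro x hx; simp
  | succ t ih =>
    intro x hx
    have pascal : ∑ k ∈ range (t+2), (-1:ℝ)^k * ((t+1).choose k) / (x+k)
        = (∑ k ∈ range (t+1), (-1:ℝ)^k * (t.choose k) / (x+k))
          - ∑ k ∈ range (t+1), (-1:ℝ)^k * (t.choose k) / ((x+1)+k) := by
      rw [Finset.sum_range_succ' (fun k => (-1:ℝ)^k * ((t+1).choose k) / (x+k)) (t+1)]
      have step : ∀ k ∈ range (t+1),
          (-1:ℝ)^(k+1) * ((t+1).choose (k+1)) / (x+((k:ℕ)+1:ℕ))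
            = (-1:ℝ)^(k+1) * (t.choose (k+1)) / (x+((k:ℝ)+1))
              - (-1:ℝ)^k * (t.choose k) / ((x+1)+k) := by
        intro k _
        have hc : ((t+1).choose (k+1) : ℝ) = (t.choose k : ℝ) + (t.choose (k+1) : ℝ) := by
          rw [Nat.choose_succ_succ]; push_cast; ring
        rw [hc]
        push_cast
        have h1 : x + ((k:ℝ) + 1) ≠ 0 := by positivity
        have h2 : (x+1) + (k:ℝ) ≠ 0 := by positivity
        rw [show x + ((k:ℝ)+1) = (x+1) + k by ring]
        ring
      rw [Finset.sum_congr rfl step, Finset.sum_sub_distrib]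
      have h2 : (∑ k ∈ range (t+1), (-1:ℝ)^(k+1) * (t.choose (k+1)) / (x+((k:ℝ)+1)))
          + (-1:ℝ)^0 * ((t.choose 0 : ℕ) : ℝ) / (x + ((0:ℕ):ℝ))
          = ∑ k ∈ range (t+1), (-1:ℝ)^k * (t.choose k) / (x+k) := by
        have e : ∑ k ∈ range (t+2), (-1:ℝ)^k * (t.choose k) / (x+k)
            = (∑ k ∈ range (t+1), (-1:ℝ)^(k+1) * (t.choose (k+1)) / (x+((k:ℝ)+1)))
              + (-1:ℝ)^0 * ((t.choose 0 : ℕ) : ℝ) / (x + ((0:ℕ):ℝ)) := by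
          rw [Finset.sum_range_succ' (fun k => (-1:ℝ)^k * (t.choose k) / (x+k)) (t+1)]
          congr 1
          apply Finset.sum_congr rfl
          intro k _
          push_cast; ring_nf
        rw [← e, Finset.sum_range_succ]
        simp [Nat.choose_succ_self]
      have h0 : (-1:ℝ)^0 * (((t+1).choose 0 : ℕ) : ℝ) / (x + ((0:ℕ):ℝ))
          = (-1:ℝ)^0 * ((t.choose 0 : ℕ) : ℝ) / (x + ((0:ℕ):ℝ)) := by simp
      push_cast at h2 h0 ⊢
      linarith [h2]
    rw [pascal, ih x hx, ih (x+1) (by linarith)]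
    have hA : (0:ℝ) < ∏ k ∈ range (t+1), (x + k) := by
      apply Finset.prod_pos; intro k _; positivity
    have hB : (0:ℝ) < ∏ k ∈ range (t+1), ((x+1) + k) := by
      apply Finset.prod_pos; intro k _; positivity
    have key : ∏ k ∈ range (t+2), (x + k) = x * ∏ k ∈ range (t+1), ((x+1) + k) := by
      rw [Finset.prod_range_succ' (fun k => x + k) (t+1)]
      simp only [Nat.cast_zero, add_zero]
      rw [mul_comm]
      congr 1
      apply Finset.prod_congr rfl
      intro k _; push_cast; ring
    have key2 : ∏ k ∈ range (t+2), (x + k) = (∏ k ∈ range (t+1), (x + k)) * (x + ((t:ℝ)+1)) := by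
      rw [Finset.prod_range_succ]; push_cast; ring_nf
    rw [key]
    have hfac : ((t+1).factorial : ℝ) = ((t:ℝ)+1) * t.factorial := by
      rw [Nat.factorial_succ]; push_cast; ring
    rw [hfac]
    have hxB : x * ∏ k ∈ range (t+1), ((x+1) + k)
        = (∏ k ∈ range (t+1), (x + k)) * (x + ((t:ℝ)+1)) := by
      rw [← key, key2]
    set A := ∏ k ∈ range (t+1), (x + (k:ℝ)) with hAdef
    set B := ∏ k ∈ range (t+1), ((x+1) + (k:ℝ)) with hBdef
    have hx0 : x ≠ 0 := ne_of_gt hx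
    have hA0 : A ≠ 0 := ne_of_gt hA
    have hB0 : B ≠ 0 := ne_of_gt hB
    rw [div_sub_div _ _ hA0 hB0, div_eq_div_iff (mul_ne_zero hA0 hB0) (mul_ne_zero hx0 hB0)]
    linear_combination ((t.factorial : ℝ) * B) * hxB

lemma prod_Icc_one_eq_prod_range {M : Type*} [CommMonoid M] (f : ℕ → M) (t : ℕ) :
    ∏ j ∈ Finset.Icc 1 t, f j = ∏ k ∈ Finset.range t, f (k+1) := by
  induction t with
  | zero => simp
  | succ m ih =>
    rw [Finset.prod_Icc_succ_top (by omega) f, ih, Finset.prod_range_succ]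

lemma prod_range_add_one_fac (t : ℕ) : ∏ k ∈ Finset.range t, ((k:ℝ)+1) = t.factorial := by
  induction t with
  | zero => simp
  | succ m ihm =>
    rw [Finset.prod_range_succ, ihm, Nat.factorial_succ]
    push_cast; ring

lemma key_sum (r t : ℕ) (hr : 1 ≤ r) :
    ∑ J ∈ (Finset.univ : Finset (Fin t)).powerset, (-1:ℝ)^J.card / ((J.card : ℝ) * r + 1)
      = ∏ j ∈ Finset.Icc 1 t, ((j:ℝ) * r) / ((j:ℝ) * r + 1) := by
  classical
  have hr0 : (0:ℝ) < r := by exact_mod_cast hr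
  set x : ℝ := 1 / r with hxdef
  have hx : 0 < x := by positivity
  -- step 1: sum over powerset = sum over k of choose
  have step1 : ∑ J ∈ (Finset.univ : Finset (Fin t)).powerset,
        (-1:ℝ)^J.card / ((J.card : ℝ) * r + 1)
      = ∑ k ∈ range (t+1), ((t.choose k : ℝ)) * ((-1:ℝ)^k / ((k:ℝ) * r + 1)) := by
    rw [Finset.sum_powerset]
    rw [Finset.card_univ, Fintype.card_fin]
    apply Finset.sum_congr rfl
    intro k hk
    have : ∀ J ∈ Finset.powersetCard k (Finset.univ : Finset (Fin t)),
        (-1:ℝ)^J.card / ((J.card : ℝ) * r + 1) = (-1:ℝ)^k / ((k:ℝ) * r + 1) := by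
      intro J hJ
      rw [(Finset.mem_powersetCard.1 hJ).2]
    rw [Finset.sum_congr rfl this, Finset.sum_const, Finset.card_powersetCard,
      Finset.card_univ, Fintype.card_fin, nsmul_eq_mul]
  -- step 2: term rewrite to alt_sum form
  have step2 : ∀ k : ℕ, ((t.choose k : ℝ)) * ((-1:ℝ)^k / ((k:ℝ) * r + 1))
      = x * ((-1:ℝ)^k * (t.choose k) / (x + k)) := by
    intro k
    have h1 : (k:ℝ) * r + 1 ≠ 0 := by positivity
    have h2 : x + (k:ℝ) ≠ 0 := by positivity
    rw [hxdef]
    field_simp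
    ring
  rw [step1, Finset.sum_congr rfl (fun k _ => step2 k), ← Finset.mul_sum,
    alt_sum t x hx]
  -- step 3: simplify x * (t! / prod)
  have hsplit : ∏ k ∈ range (t+1), (x + k) = x * ∏ k ∈ range t, (x + ((k:ℝ)+1)) := by
    rw [Finset.prod_range_succ' (fun k => x + k) t]
    simp only [Nat.cast_zero, add_zero]
    rw [mul_comm]
    congr 1
    apply Finset.prod_congr rfl
    intro k _; push_cast; ring
  rw [hsplit]
  have hP : (0:ℝ) < ∏ k ∈ range t, (x + ((k:ℝ)+1)) := by
    apply Finset.prod_pos; intro k _; positivity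
  have hx0 : x ≠ 0 := ne_of_gt hx
  rw [show x * ((t.factorial:ℝ) / (x * ∏ k ∈ range t, (x + ((k:ℝ)+1))))
      = (t.factorial:ℝ) / ∏ k ∈ range t, (x + ((k:ℝ)+1)) by
    field_simp]
  -- step 4: RHS
  have hRHS : ∏ j ∈ Finset.Icc 1 t, ((j:ℝ) * r) / ((j:ℝ) * r + 1)
      = ∏ k ∈ range t, ((((k:ℝ)+1) * r) / (((k:ℝ)+1) * r + 1)) := by
    rw [prod_Icc_one_eq_prod_range (fun j => ((j:ℝ) * r) / ((j:ℝ) * r + 1)) t]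
    apply Finset.prod_congr rfl
    intro k _
    push_cast; ring_nf
  rw [hRHS, Finset.prod_div_distrib]
  have hfact : ∏ k ∈ range t, (((k:ℝ)+1) * r) = (t.factorial : ℝ) * r^t := by
    rw [Finset.prod_mul_distrib, Finset.prod_const, Finset.card_range, prod_range_add_one_fac]
  have hden : ∏ k ∈ range t, (((k:ℝ)+1) * r + 1) = r^t * ∏ k ∈ range t, (x + ((k:ℝ)+1)) := by
    rw [show ((r:ℝ))^t = ∏ _k ∈ range t, (r:ℝ) by
        simp, ← Finset.prod_mul_distrib]
    apply Finset.prod_congr rfl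
    intro k _
    rw [hxdef]
    field_simp
    ring
  rw [hfact, hden]
  have hr0' : (r:ℝ)^t ≠ 0 := by positivity
  have hden0 : ∏ k ∈ range t, (x + ((k:ℝ)+1)) ≠ 0 := ne_of_gt hP
  field_simp

/-- Given a `t`-colored recovery structure on `[n]` with recovering sets of
size exactly `r`, there is a large subset `U` such that every nonempty `U' ⊆ U` contains a
vertex missing one color among its outgoing edges within `U'`. -/
theorem exists_large_color_missing_set (n r t : ℕ) (hn : 1 ≤ n) (hr : 1 ≤ r) (ht : 1 ≤ t)
    (R : Fin n → Fin t → Finset (Fin n))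
    (hnot : ∀ i j, i ∉ R i j)
    (hcard : ∀ i j, (R i j).card = r)
    (hdisj : ∀ i, ∀ j j', j ≠ j' → Disjoint (R i j) (R i j')) :
    ∃ U : Finset (Fin n),
      (n : ℝ) * (1 - 1 / ∏ j ∈ Finset.Icc 1 t, (1 + 1 / ((j : ℝ) * r))) ≤ U.card ∧
      ∀ U' ⊆ U, U'.Nonempty → ∃ v ∈ U', ∃ j : Fin t, R v j ∩ U' = ∅ := by
  classical
  have hr0 : (0:ℝ) < r := by exact_mod_cast hr
  set p : ℝ := ∏ j ∈ Finset.Icc 1 t, ((j:ℝ) * r) / ((j:ℝ) * r + 1) with hpdef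
  -- the target bound equals n * (1 - p)
  have hbound : (n : ℝ) * (1 - 1 / ∏ j ∈ Finset.Icc 1 t, (1 + 1 / ((j : ℝ) * r)))
      = (n:ℝ) * (1 - p) := by
    congr 2
    rw [one_div, ← Finset.prod_inv_distrib]
    apply Finset.prod_congr rfl
    intro j hj
    have hj1 : 1 ≤ j := (Finset.mem_Icc.1 hj).1
    have hjr : (0:ℝ) < (j:ℝ) * r := by
      have : (0:ℝ) < (j:ℝ) := by exact_mod_cast hj1
      positivity
    rw [show (1:ℝ) + 1 / ((j:ℝ)*r) = ((j:ℝ)*r + 1) / ((j:ℝ)*r) by field_simp]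
    rw [inv_div]
  set N : ℕ := Fintype.card (Equiv.Perm (Fin n)) with hNdef
  have hN0 : 0 < N := Fintype.card_pos
  -- count of permutations where all of W precedes v, as a real
  have hEJ : ∀ (v : Fin n) (J : Finset (Fin t)),
      ((Finset.univ.filter
        (fun π : Equiv.Perm (Fin n) => ∀ w ∈ J.biUnion (R v), π w < π v)).card : ℝ)
      = (N : ℝ) / ((J.card : ℝ) * r + 1) := by
    intro v J
    have hvW : v ∉ J.biUnion (R v) := by
      intro h
      obtain ⟨j, _, hj⟩ := Finset.mem_biUnion.1 h
      exact hnot v j hj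
    have hWcard : (J.biUnion (R v)).card = J.card * r := by
      rw [Finset.card_biUnion (fun j hj j' hj' hne => hdisj v j j' hne)]
      rw [Finset.sum_congr rfl (fun j _ => hcard v j), Finset.sum_const, smul_eq_mul]
    have := count_all_before v (J.biUnion (R v)) hvW
    rw [hWcard] at this
    have hcast : ((Finset.univ.filter
        (fun π : Equiv.Perm (Fin n) => ∀ w ∈ J.biUnion (R v), π w < π v)).card : ℝ)
        * ((J.card : ℝ) * r + 1) = (N : ℝ) := by
      exact_mod_cast congrArg (Nat.cast : ℕ → ℝ) this
    have hpos : ((J.card : ℝ) * r + 1) ≠ 0 := by positivity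
    field_simp [hpos] at hcast ⊢
    linarith [hcast]
  -- count of permutations where v is "kept"
  have hkept : ∀ v : Fin n,
      ((Finset.univ.filter
        (fun π : Equiv.Perm (Fin n) => ∃ j : Fin t, ∀ w ∈ R v j, π w < π v)).card : ℝ)
      = (N : ℝ) * (1 - p) := by
    intro v
    have hsum : ((Finset.univ.filter
        (fun π : Equiv.Perm (Fin n) => ∃ j : Fin t, ∀ w ∈ R v j, π w < π v)).card : ℝ)
        = ∑ π : Equiv.Perm (Fin n),
            (if ∃ j : Fin t, ∀ w ∈ R v j, π w < π v then (1:ℝ) else 0) := by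
      rw [Finset.sum_boole]
    rw [hsum]
    have expand : ∀ π : Equiv.Perm (Fin n),
        (if ∃ j : Fin t, ∀ w ∈ R v j, π w < π v then (1:ℝ) else 0)
        = 1 - ∑ J ∈ (Finset.univ : Finset (Fin t)).powerset,
            (-1:ℝ)^J.card * (if ∀ w ∈ J.biUnion (R v), π w < π v then (1:ℝ) else 0) := by
      intro π
      set x : Fin t → ℝ := fun j => if ∀ w ∈ R v j, π w < π v then (1:ℝ) else 0 with hx
      have claimB : ∏ j ∈ (Finset.univ : Finset (Fin t)), (1 - x j)
          = ∑ J ∈ (Finset.univ : Finset (Fin t)).powerset,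
              (-1:ℝ)^J.card * (if ∀ w ∈ J.biUnion (R v), π w < π v then (1:ℝ) else 0) := by
        have h1 : ∀ j ∈ (Finset.univ : Finset (Fin t)), (1 - x j) = (-x j) + 1 := by
          intro j _; ring
        rw [Finset.prod_congr rfl h1, Finset.prod_add]
        apply Finset.sum_congr rfl
        intro J hJ
        rw [Finset.prod_const_one, mul_one]
        have h2 : ∏ j ∈ J, (-x j) = (-1:ℝ)^J.card * ∏ j ∈ J, x j := by
          rw [show (fun j => -x j) = (fun j => (-1) * x j) by funext j; ring]
          rw [Finset.prod_mul_distrib, Finset.prod_const]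
        rw [h2]
        congr 1
        by_cases hall : ∀ w ∈ J.biUnion (R v), π w < π v
        · rw [if_pos hall]
          apply Finset.prod_eq_one
          intro j hjJ
          simp only [hx]
          exact if_pos (fun w hw => hall w (Finset.mem_biUnion.2 ⟨j, hjJ, hw⟩))
        · rw [if_neg hall]
          push_neg at hall
          obtain ⟨w, hw, hlt⟩ := hall
          obtain ⟨j, hjJ, hjw⟩ := Finset.mem_biUnion.1 hw
          apply Finset.prod_eq_zero hjJ
          simp only [hx]
          exact if_neg (fun hcon => absurd (hcon w hjw) (not_lt.2 hlt))
      by_cases hk : ∃ j : Fin t, ∀ w ∈ R v j, π w < π v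
      · obtain ⟨j, hj⟩ := hk
        rw [if_pos ⟨j, hj⟩, ← claimB]
        have : ∏ j ∈ (Finset.univ : Finset (Fin t)), (1 - x j) = 0 :=
          Finset.prod_eq_zero (Finset.mem_univ j) (by simp only [hx]; rw [if_pos hj]; ring)
        rw [this]; ring
      · rw [if_neg hk, ← claimB]
        push_neg at hk
        have : ∀ j ∈ (Finset.univ : Finset (Fin t)), (1 - x j) = 1 := by
          intro j _
          have : x j = 0 := by
            simp only [hx, ite_eq_right_iff]
            intro hcon
            exact absurd hcon (by simpa using hk j)
          rw [this]; ring
        rw [Finset.prod_congr rfl this, Finset.prod_const_one]; ring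
    rw [Finset.sum_congr rfl (fun π _ => expand π), Finset.sum_sub_distrib,
      Finset.sum_const, Finset.card_univ, ← hNdef, nsmul_eq_mul, mul_one]
    rw [Finset.sum_comm]
    have hinner : ∀ J ∈ (Finset.univ : Finset (Fin t)).powerset,
        ∑ π : Equiv.Perm (Fin n),
          (-1:ℝ)^J.card * (if ∀ w ∈ J.biUnion (R v), π w < π v then (1:ℝ) else 0)
        = (-1:ℝ)^J.card * ((N : ℝ) / ((J.card : ℝ) * r + 1)) := by
      intro J _
      rw [← Finset.mul_sum, Finset.sum_boole, hEJ v J]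
    rw [Finset.sum_congr rfl hinner]
    have : ∑ J ∈ (Finset.univ : Finset (Fin t)).powerset,
        (-1:ℝ)^J.card * ((N : ℝ) / ((J.card : ℝ) * r + 1))
        = (N : ℝ) * ∑ J ∈ (Finset.univ : Finset (Fin t)).powerset,
            (-1:ℝ)^J.card / ((J.card : ℝ) * r + 1) := by
      rw [Finset.mul_sum]
      apply Finset.sum_congr rfl
      intro J _; ring
    rw [this, key_sum r t hr, ← hpdef]
    ring
  -- double counting and averaging
  set U : Equiv.Perm (Fin n) → Finset (Fin n) :=
    fun π => Finset.univ.filter (fun v => ∃ j : Fin t, ∀ w ∈ R v j, π w < π v) with hUdef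
  have hdouble : ∑ π : Equiv.Perm (Fin n), ((U π).card : ℝ)
      = (n : ℝ) * (N : ℝ) * (1 - p) := by
    have h1 : ∀ π : Equiv.Perm (Fin n), ((U π).card : ℝ)
        = ∑ v : Fin n, (if ∃ j : Fin t, ∀ w ∈ R v j, π w < π v then (1:ℝ) else 0) := by
      intro π; rw [hUdef, Finset.sum_boole]
    rw [Finset.sum_congr rfl (fun π _ => h1 π), Finset.sum_comm]
    have h2 : ∀ v : Fin n,
        ∑ π : Equiv.Perm (Fin n),
          (if ∃ j : Fin t, ∀ w ∈ R v j, π w < π v then (1:ℝ) else 0)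
        = (N : ℝ) * (1 - p) := by
      intro v
      rw [Finset.sum_boole, hkept v]
    rw [Finset.sum_congr rfl (fun v _ => h2 v), Finset.sum_const, Finset.card_univ,
      Fintype.card_fin, nsmul_eq_mul]
    ring
  obtain ⟨π, hπ⟩ : ∃ π : Equiv.Perm (Fin n), (n:ℝ) * (1 - p) ≤ ((U π).card : ℝ) := by
    by_contra hcon
    push_neg at hcon
    have hlt : ∑ π : Equiv.Perm (Fin n), ((U π).card : ℝ)
        < ∑ _π : Equiv.Perm (Fin n), (n:ℝ) * (1 - p) := by
      apply Finset.sum_lt_sum_of_nonempty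
      · exact Finset.univ_nonempty
      · intro π _; exact hcon π
    rw [Finset.sum_const, Finset.card_univ, ← hNdef, nsmul_eq_mul, hdouble] at hlt
    nlinarith [hlt]
  refine ⟨U π, ?_, ?_⟩
  · rw [hbound]; exact hπ
  · intro U' hU' hne
    obtain ⟨v, hvU', hmin⟩ := U'.exists_min_image (fun w => π w) hne
    have hkeptv : ∃ j : Fin t, ∀ w ∈ R v j, π w < π v := by
      have := hU' hvU'
      rw [hUdef, Finset.mem_filter] at this
      exact this.2
    obtain ⟨j, hj⟩ := hkeptv
    refine ⟨v, hvU', j, ?_⟩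
    rw [Finset.eq_empty_iff_forall_notMem]
    intro w hw
    rw [Finset.mem_inter] at hw
    exact absurd (hj w hw.1) (not_lt.2 (hmin w hw.2))
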